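/- With L a strongly symmetric ample line bundle of type (1,2,4) on an abelian 3-fold A and the basis s₀,...,s₇ of H⁰(L) constructed from a G'-invariant section s₀ with i(s₀)=s₀ (s₁ = σ'₂ s₀, s₂ = τ'₁ s₀, s₃ = τ'₂ s₀, s₄ = σ'₂τ'₁ s₀, s₅ = σ'₂τ'₂ s₀, s₆ = τ'₁τ'₂ s₀, s₇ = σ'₂τ'₁τ'₂ s₀): the (+1)-eigenspace H⁰(L)⁺_i of the inversion i on H⁰(L) is spanned by s₀,s₁,s₂,s₃,s₄,s₅ (dimension 6), and the (−1)-eigenspace H⁰(L)⁻_i is spanned by s₆,s₇ (dimension 2). -/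
import Mathlib


/-!
STATEMENT 7.
With `L` a strongly symmetric ample line bundle of type `(1,2,4)` on an abelian
3-fold `A` and the basis `s₀, …, s₇` of `H⁰(L)` constructed from a
`G'`-invariant section `s₀` with `i(s₀) = s₀` (`s₁ = σ'₂s₀`, `s₂ = τ'₁s₀`,
`s₃ = τ'₂s₀`, `s₄ = σ'₂τ'₁s₀`, `s₅ = σ'₂τ'₂s₀`, `s₆ = τ'₁τ'₂s₀`,
`s₇ = σ'₂τ'₁τ'₂s₀`): the `(+1)`-eigenspace `H⁰(L)⁺_i` of the inversion `i`
on `H⁰(L)` is spanned by `s₀,s₁,s₂,s₃,s₄,s₅` (dimension `6`), and the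
`(-1)`-eigenspace `H⁰(L)⁻_i` is spanned by `s₆,s₇` (dimension `2`). -/

/-- Abstract model of the theta group `𝒢(L)` of a symmetric ample line bundle
`L` on an abelian variety, as a central extension `1 → ℂ* → 𝒢(L) → K(L) → 0`
with the Weil form as commutator, together with its weight-one action on
`H⁰(L)`, the action of the inversion `i` (via the normalized isomorphism
`ψ : L ≅ i*L`, `ψ(0) = +1`) and the conjugation `δ₋₁ : z ↦ izi`. -/
structure SymmetricThetaActionSetup where
  /-- the points of the abelian variety `A` -/
  A : Type
  [grpA : AddCommGroup A]
  /-- the fixed group `K(L)` -/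
  K : AddSubgroup A
  /-- the theta group `𝒢(L)` -/
  G : Type
  [grpG : Group G]
  /-- the central embedding `ℂ* → 𝒢(L)` -/
  iota : ℂˣ →* G
  iota_injective : Function.Injective iota
  iota_central : ∀ (c : ℂˣ) (x : G), iota c * x = x * iota c
  /-- the projection `𝒢(L) → K(L)` -/
  proj : G → A
  proj_one : proj 1 = 0
  proj_mul : ∀ x y, proj (x * y) = proj x + proj y
  proj_mem : ∀ x, proj x ∈ K
  proj_surjOn : ∀ a ∈ K, ∃ x, proj x = a
  proj_ker : ∀ x, proj x = 0 ↔ ∃ c, x = iota c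
  /-- the Weil form `e^L`, as the commutator form of `𝒢(L)` -/
  weil : A → A → ℂˣ
  weil_comm : ∀ x y : G, x * y = iota (weil (proj x) (proj y)) * (y * x)
  /-- `δ₋₁ : 𝒢(L) → 𝒢(L)`, `z ↦ izi` -/
  deltaNeg : G → G
  deltaNeg_mul : ∀ x y, deltaNeg (x * y) = deltaNeg x * deltaNeg y
  deltaNeg_invol : ∀ x, deltaNeg (deltaNeg x) = x
  deltaNeg_iota : ∀ c, deltaNeg (iota c) = iota c
  deltaNeg_proj : ∀ x, proj (deltaNeg x) = - proj x
  /-- the form `e^L_* : A₂ → {±1}` of the symmetric bundle `L` -/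
  estar : A → ℂˣ
  estar_sq : ∀ a, estar a * estar a = 1
  estar_zero : estar 0 = 1
  /-- Mumford's lemma: `δ₋₁(z) = e^L_*(z)·z` for `z` of order `2`, `z ≠ ±1` -/
  mumford : ∀ z : G, z * z = 1 → proj z ≠ 0 → deltaNeg z = iota (estar (proj z)) * z
  /-- the space of sections `H⁰(A,L)` -/
  H0 : Type
  [grpH0 : AddCommGroup H0]
  [modH0 : Module ℂ H0]
  [fdH0 : FiniteDimensional ℂ H0]
  /-- the weight-one action of `𝒢(L)` on `H⁰(L)` -/
  act : G →* (H0 ≃ₗ[ℂ] H0)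
  act_iota : ∀ (c : ℂˣ) (v : H0), act (iota c) v = (c : ℂ) • v
  /-- the action of the inversion `i` on `H⁰(L)` -/
  inv : H0 ≃ₗ[ℂ] H0
  inv_invol : ∀ v, inv (inv v) = v
  /-- compatibility: `i ∘ z ∘ i = δ₋₁(z)` on `H⁰(L)` -/
  inv_act : ∀ (z : G) (v : H0), inv (act z (inv v)) = act (deltaNeg z) v

attribute [instance] SymmetricThetaActionSetup.grpA SymmetricThetaActionSetup.grpG
  SymmetricThetaActionSetup.grpH0 SymmetricThetaActionSetup.modH0
  SymmetricThetaActionSetup.fdH0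

private theorem central_swap1' {G : Type*} [Group G] (c x y : G) (hc : ∀ z : G, c * z = z * c)
    (h : x * y = c * (y * x)) : y⁻¹ * x = c * (x * y⁻¹) := by
  calc y⁻¹ * x = y⁻¹ * (x * y) * y⁻¹ := by group
    _ = y⁻¹ * (c * (y * x)) * y⁻¹ := by rw [h]
    _ = c * (x * y⁻¹) := by
        simp only [hc, mul_assoc, inv_mul_cancel_left]

private theorem central_swap2' {G : Type*} [Group G] (c x y : G) (hc : ∀ z : G, c * z = z * c)
    (h : x * y = c * (y * x)) : x⁻¹ * y⁻¹ = c * (y⁻¹ * x⁻¹) := by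
  have h1 := congrArg (·⁻¹) h
  simp only [mul_inv_rev] at h1
  calc x⁻¹ * y⁻¹ = (x⁻¹ * y⁻¹ * c⁻¹) * c := by group
    _ = (y⁻¹ * x⁻¹) * c := by rw [← h1]
    _ = c * (y⁻¹ * x⁻¹) := (hc _).symm

theorem statement7 (T : SymmetricThetaActionSetup)
    -- `h⁰(L) = 1·2·4 = 8` (type `(1,2,4)` on an abelian 3-fold)
    (h0 : Module.finrank ℂ T.H0 = 8)
    -- `K(L) ≅ ℤ/2 ⊕ ℤ/4 ⊕ ℤ/2 ⊕ ℤ/4`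
    (hK : Nat.card T.K = 64)
    -- `L` is strongly symmetric
    (hstrong : ∀ g ∈ T.K, g + g = 0 → T.estar g = 1)
    -- lifts `σ'₁, σ'₂, τ'₁, τ'₂ ∈ 𝒢(L)` of generators `σ₁, σ₂, τ₁, τ₂` of
    -- `K(L) ≅ ℤ/2 ⊕ ℤ/4 ⊕ ℤ/2 ⊕ ℤ/4`, with `o(σ'ᵢ) = 2`, `o(τ'ᵢ) = 4`
    (σ₁' σ₂' τ₁' τ₂' : T.G)
    (hσ₁ : σ₁' * σ₁' = 1) (hσ₂ : σ₂' * σ₂' = 1)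
    (hσ₁0 : T.proj σ₁' ≠ 0) (hσ₂0 : T.proj σ₂' ≠ 0)
    (hτ₁ : τ₁' ^ 4 = 1) (hτ₂ : τ₂' ^ 4 = 1)
    (hτ₁o : τ₁' * τ₁' ≠ 1) (hτ₂o : τ₂' * τ₂' ≠ 1)
    (hτ₁sq0 : T.proj (τ₁' * τ₁') ≠ 0) (hτ₂sq0 : T.proj (τ₂' * τ₂') ≠ 0)
    -- `K(L)` is generated by `σ₁, τ₁, σ₂, τ₂`
    (hgen : T.K = AddSubgroup.closure {T.proj σ₁', T.proj τ₁', T.proj σ₂', T.proj τ₂'})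
    -- values of the Weil form: `e^L(σ₁,σ₂) = -1`, `e^L(τ₁,τ₂) = -i`,
    -- `e^L(σᵢ,τⱼ) = 1`
    (hw₁ : (T.weil (T.proj σ₁') (T.proj σ₂') : ℂ) = -1)
    (hw₂ : (T.weil (T.proj τ₁') (T.proj τ₂') : ℂ) = -Complex.I)
    (hw₃ : T.weil (T.proj σ₁') (T.proj τ₁') = 1)
    (hw₄ : T.weil (T.proj σ₁') (T.proj τ₂') = 1)
    (hw₅ : T.weil (T.proj σ₂') (T.proj τ₁') = 1)
    (hw₆ : T.weil (T.proj σ₂') (T.proj τ₂') = 1)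
    -- normalization of the lifts: `δ₋₁(σ'ⱼ) = σ'ⱼ` and `δ₋₁(τ'ⱼ) = (τ'ⱼ)⁻¹`
    (hδσ₁ : T.deltaNeg σ₁' = σ₁') (hδσ₂ : T.deltaNeg σ₂' = σ₂')
    (hδτ₁ : T.deltaNeg τ₁' = τ₁'⁻¹) (hδτ₂ : T.deltaNeg τ₂' = τ₂'⁻¹)
    -- `s₀` is a `G'`-invariant section, `G' = ⟨σ'₁, (τ'₁)², (τ'₂)²⟩`,
    -- with `i(s₀) = s₀`
    (s₀ : T.H0) (hs₀ : s₀ ≠ 0)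
    (hG' : ∀ z ∈ Subgroup.closure ({σ₁', τ₁' * τ₁', τ₂' * τ₂'} : Set T.G),
      T.act z s₀ = s₀)
    (hinvs₀ : T.inv s₀ = s₀)
    -- the resulting basis `s₀, …, s₇` of `H⁰(L)`
    (s : Fin 8 → T.H0)
    (hbasis : LinearIndependent ℂ s ∧ Submodule.span ℂ (Set.range s) = ⊤)
    (hs0 : s 0 = s₀)
    (hs1 : s 1 = T.act σ₂' s₀)
    (hs2 : s 2 = T.act τ₁' s₀)
    (hs3 : s 3 = T.act τ₂' s₀)
    (hs4 : s 4 = T.act (σ₂' * τ₁') s₀)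
    (hs5 : s 5 = T.act (σ₂' * τ₂') s₀)
    (hs6 : s 6 = T.act (τ₁' * τ₂') s₀)
    (hs7 : s 7 = T.act (σ₂' * τ₁' * τ₂') s₀) :
    -- `H⁰(L)⁺_i = ⟨s₀,…,s₅⟩`
    Module.End.eigenspace (↑T.inv : T.H0 →ₗ[ℂ] T.H0) 1
      = Submodule.span ℂ {s 0, s 1, s 2, s 3, s 4, s 5} ∧
    -- `H⁰(L)⁻_i = ⟨s₆,s₇⟩`
    Module.End.eigenspace (↑T.inv : T.H0 →ₗ[ℂ] T.H0) (-1)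
      = Submodule.span ℂ {s 6, s 7} ∧
    Module.finrank ℂ (Module.End.eigenspace (↑T.inv : T.H0 →ₗ[ℂ] T.H0) 1) = 6 ∧
    Module.finrank ℂ (Module.End.eigenspace (↑T.inv : T.H0 →ₗ[ℂ] T.H0) (-1)) = 2 := by

  classical
  obtain ⟨hli, hspan⟩ := hbasis
  have act_mul : ∀ (x y : T.G) (v : T.H0), T.act (x * y) v = T.act x (T.act y v) := by
    intro x y v; rw [map_mul]; rfl
  have act_iotaMul : ∀ (c : ℂˣ) (z : T.G) (v : T.H0),
      T.act (T.iota c * z) v = (c : ℂ) • T.act z v := by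
    intro c z v; rw [act_mul, T.act_iota]
  have hfix1 : T.act (τ₁' * τ₁') s₀ = s₀ := hG' _ (Subgroup.subset_closure (by simp))
  have hfix2 : T.act (τ₂' * τ₂') s₀ = s₀ := hG' _ (Subgroup.subset_closure (by simp))
  have hcube : ∀ τ : T.G, τ ^ 4 = 1 → T.act (τ * τ) s₀ = s₀ → T.act τ⁻¹ s₀ = T.act τ s₀ := by
    intro τ h4 hfix
    have hi : τ⁻¹ = τ * (τ * τ) := by
      refine inv_eq_of_mul_eq_one_right ?_
      have : τ ^ 4 = τ * (τ * (τ * τ)) := by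
        rw [pow_succ, pow_succ, pow_succ, pow_one, mul_assoc, mul_assoc]
      rw [← this, h4]
    rw [hi, act_mul, hfix]
  have hτ₁inv : T.act τ₁'⁻¹ s₀ = T.act τ₁' s₀ := hcube _ hτ₁ hfix1
  have hτ₂inv : T.act τ₂'⁻¹ s₀ = T.act τ₂' s₀ := hcube _ hτ₂ hfix2
  set u : ℂˣ := T.weil (T.proj τ₁') (T.proj τ₂') with hu_def
  have hcomm : τ₁' * τ₂' = T.iota u * (τ₂' * τ₁') := T.weil_comm τ₁' τ₂'
  have hcen : ∀ z : T.G, T.iota u * z = z * T.iota u := fun z => T.iota_central u z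
  have hA : τ₁'⁻¹ * τ₂'⁻¹ = T.iota u * (τ₂'⁻¹ * τ₁'⁻¹) := central_swap2' _ _ _ hcen hcomm
  have hC : τ₂'⁻¹ * τ₁' = T.iota u * (τ₁' * τ₂'⁻¹) := central_swap1' _ _ _ hcen hcomm
  -- the key computation: act (τ₁'⁻¹ τ₂'⁻¹) s₀ = - act (τ₁' τ₂') s₀
  have hX : T.act (τ₁'⁻¹ * τ₂'⁻¹) s₀ = -(T.act (τ₁' * τ₂') s₀) := by
    rw [hA, act_iotaMul, act_mul, hτ₁inv, ← act_mul, hC, act_iotaMul, act_mul, hτ₂inv,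
      ← act_mul, smul_smul]
    have hu2 : ((u : ℂ) * (u : ℂ)) = -1 := by
      rw [hw₂]; simp [Complex.I_mul_I]
    rw [hu2, neg_one_smul]
  -- inv on the basis vectors
  have hinvact : ∀ z : T.G, T.inv (T.act z s₀) = T.act (T.deltaNeg z) s₀ := by
    intro z
    have h := T.inv_act z s₀
    rwa [hinvs₀] at h
  have hinv0 : T.inv (s 0) = s 0 := by rw [hs0, hinvs₀]
  have hinv1 : T.inv (s 1) = s 1 := by rw [hs1, hinvact, hδσ₂]
  have hinv2 : T.inv (s 2) = s 2 := by rw [hs2, hinvact, hδτ₁, hτ₁inv]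
  have hinv3 : T.inv (s 3) = s 3 := by rw [hs3, hinvact, hδτ₂, hτ₂inv]
  have hinv4 : T.inv (s 4) = s 4 := by
    rw [hs4, hinvact, T.deltaNeg_mul, hδσ₂, hδτ₁, act_mul, hτ₁inv, ← act_mul]
  have hinv5 : T.inv (s 5) = s 5 := by
    rw [hs5, hinvact, T.deltaNeg_mul, hδσ₂, hδτ₂, act_mul, hτ₂inv, ← act_mul]
  have hinv6 : T.inv (s 6) = -(s 6) := by
    rw [hs6, hinvact, T.deltaNeg_mul, hδτ₁, hδτ₂, hX]
  have hinv7 : T.inv (s 7) = -(s 7) := by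
    rw [hs7, hinvact, T.deltaNeg_mul, T.deltaNeg_mul, hδσ₂, hδτ₁, hδτ₂, mul_assoc,
      act_mul, hX, map_neg, ← act_mul, mul_assoc]
  -- eigenspace memberships
  set f : T.H0 →ₗ[ℂ] T.H0 := (↑T.inv : T.H0 →ₗ[ℂ] T.H0) with hf_def
  have hfs : ∀ v : T.H0, f v = T.inv v := fun v => rfl
  set Ep := Module.End.eigenspace f 1 with hEp
  set Em := Module.End.eigenspace f (-1) with hEm
  set P := Submodule.span ℂ ({s 0, s 1, s 2, s 3, s 4, s 5} : Set T.H0) with hP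
  set Q := Submodule.span ℂ ({s 6, s 7} : Set T.H0) with hQ
  have hmemEp : ∀ v : T.H0, T.inv v = v → v ∈ Ep := by
    intro v hv
    rw [hEp, Module.End.mem_eigenspace_iff, one_smul]
    exact hv
  have hmemEm : ∀ v : T.H0, T.inv v = -v → v ∈ Em := by
    intro v hv
    rw [hEm, Module.End.mem_eigenspace_iff, neg_one_smul]
    exact hv
  have hPle : P ≤ Ep := by
    rw [hP, Submodule.span_le]
    rintro x (rfl | rfl | rfl | rfl | rfl | rfl)
    exacts [hmemEp _ hinv0, hmemEp _ hinv1, hmemEp _ hinv2, hmemEp _ hinv3,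
      hmemEp _ hinv4, hmemEp _ hinv5]
  have hQle : Q ≤ Em := by
    rw [hQ, Submodule.span_le]
    rintro x (rfl | rfl)
    exacts [hmemEm _ hinv6, hmemEm _ hinv7]
  -- dimensions of the spans
  set g6 : Fin 6 → Fin 8 := ![0, 1, 2, 3, 4, 5] with hg6
  set g2 : Fin 2 → Fin 8 := ![6, 7] with hg2
  have hrangeP : Set.range (s ∘ g6) = ({s 0, s 1, s 2, s 3, s 4, s 5} : Set T.H0) := by
    ext x
    constructor
    · rintro ⟨i, rfl⟩
      fin_cases i <;> simp [hg6, show (![0,1,2,3,4,5] : Fin 6 → Fin 8) 5 = 5 from rfl]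
    · rintro (rfl | rfl | rfl | rfl | rfl | rfl)
      exacts [⟨0, by simp [hg6]⟩, ⟨1, by simp [hg6]⟩, ⟨2, by simp [hg6]⟩,
        ⟨3, by simp [hg6]⟩, ⟨4, by simp [hg6]⟩, ⟨5, rfl⟩]
  have hrangeQ : Set.range (s ∘ g2) = ({s 6, s 7} : Set T.H0) := by
    ext x
    constructor
    · rintro ⟨i, rfl⟩
      fin_cases i <;> simp [hg2]
    · rintro (rfl | rfl)
      exacts [⟨0, by simp [hg2]⟩, ⟨1, by simp [hg2]⟩]
  have hg6inj : Function.Injective g6 := by rw [hg6]; decide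
  have hg2inj : Function.Injective g2 := by rw [hg2]; decide
  have hdimP : Module.finrank ℂ P = 6 := by
    rw [hP, ← hrangeP, finrank_span_eq_card (hli.comp g6 hg6inj)]
    simp
  have hdimQ : Module.finrank ℂ Q = 2 := by
    rw [hQ, ← hrangeQ, finrank_span_eq_card (hli.comp g2 hg2inj)]
    simp
  -- the two eigenspaces fill up everything and intersect trivially
  have hsup : Ep ⊔ Em = ⊤ := by
    refine le_antisymm le_top ?_
    rw [← hspan, Submodule.span_le]
    rintro x ⟨i, rfl⟩
    fin_cases i
    · exact Submodule.mem_sup_left (hmemEp _ hinv0)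
    · exact Submodule.mem_sup_left (hmemEp _ hinv1)
    · exact Submodule.mem_sup_left (hmemEp _ hinv2)
    · exact Submodule.mem_sup_left (hmemEp _ hinv3)
    · exact Submodule.mem_sup_left (hmemEp _ hinv4)
    · exact Submodule.mem_sup_left (hmemEp _ hinv5)
    · exact Submodule.mem_sup_right (hmemEm _ hinv6)
    · exact Submodule.mem_sup_right (hmemEm _ hinv7)
  have hinf : Ep ⊓ Em = ⊥ := by
    refine le_antisymm ?_ bot_le
    intro v hv
    obtain ⟨hv1, hv2⟩ := Submodule.mem_inf.mp hv
    rw [hEp, Module.End.mem_eigenspace_iff, one_smul] at hv1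
    rw [hEm, Module.End.mem_eigenspace_iff, neg_one_smul] at hv2
    have hveq : v = -v := by rw [← hv2, hv1]
    have h2 : (2 : ℂ) • v = 0 := by
      have h3 := congrArg (fun x => v + x) hveq
      simp only [add_neg_cancel] at h3
      rw [two_smul]
      exact h3
    rcases smul_eq_zero.mp h2 with h | h
    · exact absurd h (by norm_num)
    · simpa using h
  have hsum : Module.finrank ℂ Ep + Module.finrank ℂ Em = 8 := by
    have h := Submodule.finrank_sup_add_finrank_inf_eq Ep Em
    rw [hsup, hinf, finrank_bot, finrank_top, h0, add_zero] at h
    omega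
  have h6le : 6 ≤ Module.finrank ℂ Ep := hdimP ▸ Submodule.finrank_mono hPle
  have h2le : 2 ≤ Module.finrank ℂ Em := hdimQ ▸ Submodule.finrank_mono hQle
  have hEp6 : Module.finrank ℂ Ep = 6 := by omega
  have hEm2 : Module.finrank ℂ Em = 2 := by omega
  have hPeq : Ep = P := (Submodule.eq_of_le_of_finrank_eq hPle (by rw [hdimP, hEp6])).symm
  have hQeq : Em = Q := (Submodule.eq_of_le_of_finrank_eq hQle (by rw [hdimQ, hEm2])).symm
  exact ⟨hPeq, hQeq, hEp6, hEm2⟩
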